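/- First robustness of the augmented functional: if the true propensity functions p(X) (probability of S=1 given X) and e_{s,a}(X) are used but an arbitrary (possibly incorrect) outcome function g*_{s,a}(X) replaces g_{s,a}(X), the population value of the augmented expression (1/ζ)·E[ I(S=1)·g*_{s,a}(X) + w_{s,a}(X,S,A)·(Y − g*_{s,a}(X)) ] still equals γ_{s,a}, where w_{s,a}(X,S,A) = I(S=s, A=a)·p_1(X)/(e_{s,a}(X)·p_s(X)). -/

import Mathlib

open scoped Classical BigOperators
open Finset

noncomputable section

/-- Indicator of a proposition. -/
def ind (P : Prop) : ℝ := if P then 1 else 0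

/-- Expectation with respect to weights `p` on a finite outcome space. -/
def pexp {Ω : Type*} [Fintype Ω] (p : Ω → ℝ) (f : Ω → ℝ) : ℝ := ∑ ω, p ω * f ω

/-- Probability of an event. -/
def prob {Ω : Type*} [Fintype Ω] (p : Ω → ℝ) (B : Ω → Prop) : ℝ :=
  pexp p (fun ω => ind (B ω))

/-- Conditional expectation of `f` given event `B`. -/
def cexp {Ω : Type*} [Fintype Ω] (p : Ω → ℝ) (f : Ω → ℝ) (B : Ω → Prop) : ℝ :=
  pexp p (fun ω => f ω * ind (B ω)) / prob p B

/-- Conditional probability of `B` given `C`. -/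
def cprob {Ω : Type*} [Fintype Ω] (p : Ω → ℝ) (B C : Ω → Prop) : ℝ :=
  prob p (fun ω => B ω ∧ C ω) / prob p C

/-- Conditional outcome mean `g_{s,a}(x) = E[Y | X = x, S = s, A = a]`. -/
def gfun {Ω 𝒳 : Type*} [Fintype Ω] (p : Ω → ℝ) (X : Ω → 𝒳) (S A : Ω → ℕ)
    (Y : Ω → ℝ) (s a : ℕ) (x : 𝒳) : ℝ :=
  cexp p Y (fun ω => X ω = x ∧ S ω = s ∧ A ω = a)

/-- Standardized functional `γ_{s,a} = E[ E[Y | X, S=s, A=a] | S=1 ]`. -/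
def gam {Ω 𝒳 : Type*} [Fintype Ω] (p : Ω → ℝ) (X : Ω → 𝒳) (S A : Ω → ℕ)
    (Y : Ω → ℝ) (s a : ℕ) : ℝ :=
  cexp p (fun ω => gfun p X S A Y s a (X ω)) (fun ω => S ω = 1)

/-- Participation probability `p_s(x) = Pr[S = s | X = x]`. -/
def psel {Ω 𝒳 : Type*} [Fintype Ω] (p : Ω → ℝ) (X : Ω → 𝒳) (S : Ω → ℕ)
    (s : ℕ) (x : 𝒳) : ℝ :=
  cprob p (fun ω => S ω = s) (fun ω => X ω = x)

/-- Treatment probability `e_{s,a}(x) = Pr[A = a | X = x, S = s]`. -/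
def etrt {Ω 𝒳 : Type*} [Fintype Ω] (p : Ω → ℝ) (X : Ω → 𝒳) (S A : Ω → ℕ)
    (s a : ℕ) (x : 𝒳) : ℝ :=
  cprob p (fun ω => A ω = a) (fun ω => X ω = x ∧ S ω = s)

/-- Weight `w_{s,a}(X,S,A) = I(S=s, A=a) p_1(X) / (e_{s,a}(X) p_s(X))`. -/
def wgt {Ω 𝒳 : Type*} [Fintype Ω] (p : Ω → ℝ) (X : Ω → 𝒳) (S A : Ω → ℕ)
    (s a : ℕ) (ω : Ω) : ℝ :=
  ind (S ω = s ∧ A ω = a) * psel p X S 1 (X ω) /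
    (etrt p X S A s a (X ω) * psel p X S s (X ω))

/-- Influence function `Γ_{s,a}(O)`. -/
def Gam {Ω 𝒳 : Type*} [Fintype Ω] (p : Ω → ℝ) (X : Ω → 𝒳) (S A : Ω → ℕ)
    (Y : Ω → ℝ) (s a : ℕ) (ω : Ω) : ℝ :=
  (1 / prob p (fun ω' => S ω' = 1)) *
    (ind (S ω = 1) * (gfun p X S A Y s a (X ω) - gam p X S A Y s a)
      + wgt p X S A s a ω * (Y ω - gfun p X S A Y s a (X ω)))

/-- Variance of `f` under `p`. -/
def pvar {Ω : Type*} [Fintype Ω] (p : Ω → ℝ) (f : Ω → ℝ) : ℝ :=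
  pexp p (fun ω => (f ω - pexp p f) ^ 2)


/-! ### Auxiliary lemmas -/

lemma ind_nonneg' (P : Prop) : 0 ≤ ind P := by
  unfold ind; split <;> norm_num

lemma ind_mul_ind' (P Q : Prop) : ind P * ind Q = ind (P ∧ Q) := by
  unfold ind
  by_cases hP : P <;> by_cases hQ : Q <;> simp [hP, hQ]

lemma ind_congr' {P Q : Prop} (h : P ↔ Q) : ind P = ind Q := by
  unfold ind; simp only [h]

lemma prob_nonneg' {Ω : Type*} [Fintype Ω] (p : Ω → ℝ) (hp0 : ∀ ω, 0 ≤ p ω)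
    (B : Ω → Prop) : 0 ≤ prob p B :=
  Finset.sum_nonneg fun ω _ => mul_nonneg (hp0 ω) (ind_nonneg' _)

lemma prob_congr' {Ω : Type*} [Fintype Ω] (p : Ω → ℝ) {B C : Ω → Prop}
    (h : ∀ ω, B ω ↔ C ω) : prob p B = prob p C :=
  Finset.sum_congr rfl fun ω _ => by
    show p ω * ind (B ω) = p ω * ind (C ω)
    rw [ind_congr' (h ω)]

lemma prob_mono' {Ω : Type*} [Fintype Ω] (p : Ω → ℝ) (hp0 : ∀ ω, 0 ≤ p ω)
    {B C : Ω → Prop} (h : ∀ ω, B ω → C ω) : prob p B ≤ prob p C := by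
  apply Finset.sum_le_sum
  intro ω _
  apply mul_le_mul_of_nonneg_left _ (hp0 ω)
  show ind (B ω) ≤ ind (C ω)
  unfold ind
  by_cases hB : B ω
  · rw [if_pos hB, if_pos (h ω hB)]
  · rw [if_neg hB]; split <;> norm_num

lemma term_eq_zero' {Ω : Type*} [Fintype Ω] (p : Ω → ℝ) (hp0 : ∀ ω, 0 ≤ p ω)
    {B : Ω → Prop} (h : prob p B = 0) (ω : Ω) : p ω * ind (B ω) = 0 := by
  have := (Finset.sum_eq_zero_iff_of_nonneg
    (fun ω (_ : ω ∈ Finset.univ) => mul_nonneg (hp0 ω) (ind_nonneg' (B ω)))).mp h ω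
    (Finset.mem_univ ω)
  exact this

lemma pexp_mul_ind' {Ω : Type*} [Fintype Ω] (p : Ω → ℝ) (hp0 : ∀ ω, 0 ≤ p ω)
    (f : Ω → ℝ) (B : Ω → Prop) :
    pexp p (fun ω => f ω * ind (B ω)) = cexp p f B * prob p B := by
  by_cases h : prob p B = 0
  · rw [h, mul_zero]
    apply Finset.sum_eq_zero
    intro ω _
    have h0 := term_eq_zero' p hp0 h ω
    calc p ω * (f ω * ind (B ω)) = f ω * (p ω * ind (B ω)) := by ring
      _ = 0 := by rw [h0, mul_zero]
  · rw [cexp, div_mul_cancel₀ _ h]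

lemma sum_fiber' {Ω 𝒳 : Type*} [Fintype Ω] (X : Ω → 𝒳) (F : Ω → 𝒳 → ℝ) :
    ∑ ω, F ω (X ω) = ∑ x ∈ Finset.univ.image X, ∑ ω, ind (X ω = x) * F ω x := by
  have h1 : ∑ x ∈ Finset.univ.image X, ∑ ω, ind (X ω = x) * F ω x
      = ∑ ω, ∑ x ∈ Finset.univ.image X, ind (X ω = x) * F ω x := Finset.sum_comm
  rw [h1]
  apply Finset.sum_congr rfl
  intro ω _
  have h2 : ∀ x ∈ Finset.univ.image X, x ≠ X ω → ind (X ω = x) * F ω x = 0 := by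
    intro x _ hx
    have : ind (X ω = x) = 0 := by
      unfold ind; rw [if_neg (fun h => hx h.symm)]
    rw [this, zero_mul]
  rw [Finset.sum_eq_single_of_mem (X ω)
    (Finset.mem_image_of_mem X (Finset.mem_univ ω)) h2]
  have : ind (X ω = X ω) = 1 := by unfold ind; rw [if_pos rfl]
  rw [this, one_mul]

theorem statement6
    {Ω 𝒳 : Type*} [Fintype Ω] (p : Ω → ℝ)
    (hp0 : ∀ ω, 0 ≤ p ω) (hp1 : ∑ ω, p ω = 1)
    (X : Ω → 𝒳) (S A : Ω → ℕ) (Y : Ω → ℝ) (s a : ℕ) (gstar : 𝒳 → ℝ)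
    (hS : 0 < prob p (fun ω => S ω = 1))
    (hposS : ∀ x, 0 < prob p (fun ω => X ω = x ∧ S ω = 1) → 0 < psel p X S s x)
    (hposA : ∀ x, 0 < prob p (fun ω => X ω = x ∧ S ω = 1) → 0 < etrt p X S A s a x) :
    (1 / prob p (fun ω => S ω = 1)) *
        pexp p (fun ω =>
          ind (S ω = 1) * gstar (X ω) + wgt p X S A s a ω * (Y ω - gstar (X ω))) =
      gam p X S A Y s a := by
  classical
  -- per-x facts
  have hPsel : ∀ (t : ℕ) (x : 𝒳),
      psel p X S t x * prob p (fun ω => X ω = x)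
        = prob p (fun ω => X ω = x ∧ S ω = t) := by
    intro t x
    have e : prob p (fun ω => S ω = t ∧ X ω = x)
        = prob p (fun ω => X ω = x ∧ S ω = t) := prob_congr' p (fun ω => and_comm)
    by_cases hPX : prob p (fun ω => X ω = x) = 0
    · have le1 : prob p (fun ω => X ω = x ∧ S ω = t) ≤ prob p (fun ω => X ω = x) :=
        prob_mono' p hp0 (fun ω h => h.1)
      have h1 : prob p (fun ω => X ω = x ∧ S ω = t) = 0 :=
        le_antisymm (by linarith) (prob_nonneg' p hp0 _)
      rw [hPX, mul_zero, h1]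
    · rw [psel, cprob, e, div_mul_cancel₀ _ hPX]
  have hEtrt : ∀ x : 𝒳,
      etrt p X S A s a x * prob p (fun ω => X ω = x ∧ S ω = s)
        = prob p (fun ω => X ω = x ∧ S ω = s ∧ A ω = a) := by
    intro x
    have e : prob p (fun ω => A ω = a ∧ (X ω = x ∧ S ω = s))
        = prob p (fun ω => X ω = x ∧ S ω = s ∧ A ω = a) :=
      prob_congr' p (fun ω => by tauto)
    by_cases hP2 : prob p (fun ω => X ω = x ∧ S ω = s) = 0
    · have le1 : prob p (fun ω => X ω = x ∧ S ω = s ∧ A ω = a)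
          ≤ prob p (fun ω => X ω = x ∧ S ω = s) :=
        prob_mono' p hp0 (fun ω h => ⟨h.1, h.2.1⟩)
      have h1 : prob p (fun ω => X ω = x ∧ S ω = s ∧ A ω = a) = 0 :=
        le_antisymm (by linarith) (prob_nonneg' p hp0 _)
      rw [hP2, mul_zero, h1]
    · rw [etrt, cprob, e, div_mul_cancel₀ _ hP2]
  -- key cancellation
  have hKey : ∀ x : 𝒳,
      psel p X S 1 x / (etrt p X S A s a x * psel p X S s x)
          * prob p (fun ω => X ω = x ∧ S ω = s ∧ A ω = a)
        = prob p (fun ω => X ω = x ∧ S ω = 1) := by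
    intro x
    by_cases hP1 : 0 < prob p (fun ω => X ω = x ∧ S ω = 1)
    · have hps := hposS x hP1
      have he := hposA x hP1
      have hPX : prob p (fun ω => X ω = x) ≠ 0 := by
        have : prob p (fun ω => X ω = x ∧ S ω = 1) ≤ prob p (fun ω => X ω = x) :=
          prob_mono' p hp0 (fun ω h => h.1)
        exact ne_of_gt (lt_of_lt_of_le hP1 this)
      rw [← hEtrt x, ← hPsel s x, ← hPsel 1 x]
      field_simp
    · have hP1z : prob p (fun ω => X ω = x ∧ S ω = 1) = 0 :=
        le_antisymm (le_of_not_gt hP1) (prob_nonneg' p hp0 _)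
      by_cases hPX : prob p (fun ω => X ω = x) = 0
      · have le1 : prob p (fun ω => X ω = x ∧ S ω = s ∧ A ω = a)
            ≤ prob p (fun ω => X ω = x) := prob_mono' p hp0 (fun ω h => h.1)
        have hP3 : prob p (fun ω => X ω = x ∧ S ω = s ∧ A ω = a) = 0 :=
          le_antisymm (by linarith) (prob_nonneg' p hp0 _)
        rw [hP3, mul_zero, hP1z]
      · have h1 : psel p X S 1 x = 0 := by
          have := hPsel 1 x
          rw [hP1z] at this
          exact (mul_eq_zero.mp this).resolve_right hPX
        rw [h1, zero_div, zero_mul, hP1z]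
  -- per-x sum identity
  have hsum : ∀ x : 𝒳,
      (∑ ω, ind (X ω = x) * (p ω * (ind (S ω = 1) * gstar x
          + ind (S ω = s ∧ A ω = a) * psel p X S 1 x
              / (etrt p X S A s a x * psel p X S s x) * (Y ω - gstar x))))
        = ∑ ω, ind (X ω = x) * (p ω * (gfun p X S A Y s a x * ind (S ω = 1))) := by
    intro x
    have hL : (∑ ω, ind (X ω = x) * (p ω * (ind (S ω = 1) * gstar x
          + ind (S ω = s ∧ A ω = a) * psel p X S 1 x
              / (etrt p X S A s a x * psel p X S s x) * (Y ω - gstar x))))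
        = gstar x * (∑ ω, p ω * ind (X ω = x ∧ S ω = 1))
          + psel p X S 1 x / (etrt p X S A s a x * psel p X S s x)
              * (∑ ω, p ω * (Y ω * ind (X ω = x ∧ S ω = s ∧ A ω = a)))
          - psel p X S 1 x / (etrt p X S A s a x * psel p X S s x) * gstar x
              * (∑ ω, p ω * ind (X ω = x ∧ S ω = s ∧ A ω = a)) := by
      rw [Finset.mul_sum, Finset.mul_sum, Finset.mul_sum,
        ← Finset.sum_add_distrib, ← Finset.sum_sub_distrib]
      apply Finset.sum_congr rfl
      intro ω _
      rw [← ind_mul_ind' (X ω = x) (S ω = 1), ← ind_mul_ind' (X ω = x) (S ω = s ∧ A ω = a)]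
      ring
    have hR : (∑ ω, ind (X ω = x) * (p ω * (gfun p X S A Y s a x * ind (S ω = 1))))
        = gfun p X S A Y s a x * (∑ ω, p ω * ind (X ω = x ∧ S ω = 1)) := by
      rw [Finset.mul_sum]
      apply Finset.sum_congr rfl
      intro ω _
      rw [← ind_mul_ind' (X ω = x) (S ω = 1)]
      ring
    have hY : (∑ ω, p ω * (Y ω * ind (X ω = x ∧ S ω = s ∧ A ω = a)))
        = gfun p X S A Y s a x * prob p (fun ω => X ω = x ∧ S ω = s ∧ A ω = a) :=
      pexp_mul_ind' p hp0 Y (fun ω => X ω = x ∧ S ω = s ∧ A ω = a)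
    have hp1e : (∑ ω, p ω * ind (X ω = x ∧ S ω = 1))
        = prob p (fun ω => X ω = x ∧ S ω = 1) := rfl
    have hp3e : (∑ ω, p ω * ind (X ω = x ∧ S ω = s ∧ A ω = a))
        = prob p (fun ω => X ω = x ∧ S ω = s ∧ A ω = a) := rfl
    rw [hL, hR, hY, hp1e, hp3e]
    linear_combination (gfun p X S A Y s a x - gstar x) * hKey x
  -- assemble
  have keyL : pexp p (fun ω =>
        ind (S ω = 1) * gstar (X ω) + wgt p X S A s a ω * (Y ω - gstar (X ω)))
      = ∑ x ∈ Finset.univ.image X, ∑ ω, ind (X ω = x) * (p ω * (ind (S ω = 1) * gstar x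
          + ind (S ω = s ∧ A ω = a) * psel p X S 1 x
              / (etrt p X S A s a x * psel p X S s x) * (Y ω - gstar x))) :=
    sum_fiber' X (fun ω x => p ω * (ind (S ω = 1) * gstar x
        + ind (S ω = s ∧ A ω = a) * psel p X S 1 x
            / (etrt p X S A s a x * psel p X S s x) * (Y ω - gstar x)))
  have keyR : pexp p (fun ω => gfun p X S A Y s a (X ω) * ind (S ω = 1))
      = ∑ x ∈ Finset.univ.image X, ∑ ω, ind (X ω = x)
          * (p ω * (gfun p X S A Y s a x * ind (S ω = 1))) :=
    sum_fiber' X (fun ω x => p ω * (gfun p X S A Y s a x * ind (S ω = 1)))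
  have key : pexp p (fun ω =>
        ind (S ω = 1) * gstar (X ω) + wgt p X S A s a ω * (Y ω - gstar (X ω)))
      = pexp p (fun ω => gfun p X S A Y s a (X ω) * ind (S ω = 1)) := by
    rw [keyL, keyR]
    exact Finset.sum_congr rfl fun x _ => hsum x
  rw [key]
  simp only [gam, cexp]
  ring
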